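/- Let S be a compact positive operator and A a bounded self-adjoint operator on a complex Hilbert space H, set K := S ∘ A (so K* = A ∘ S), and let (λ_n, f_n, g_n) be eigen-data (the completeness hypothesis is not needed). Then for all f, g ∈ H the series Σ_n |λ_n ⟨f, g_n⟩ ⟨f_n, g⟩| converges and satisfies Σ_n |λ_n ⟨f, g_n⟩ ⟨f_n, g⟩| ≤ ‖√S f‖ · ‖√S (A g)‖. -/

import Mathlib

open ContinuousLinearMap Filter Topology Finset

/-- Absolute convergence bound: for `K = S ∘ A` (`S` compact positive, `A` bounded
self-adjoint) with eigen-data `(λ_n, f_n, g_n)`, for all `f, g ∈ H` the series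
`Σ_n |λ_n ⟨f, g_n⟩ ⟨f_n, g⟩|` converges and is bounded by `‖√S f‖ ‖√S (A g)‖`. -/
theorem stmt16
    {H : Type*} [NormedAddCommGroup H] [InnerProductSpace ℂ H] [CompleteSpace H]
    (S A : H →L[ℂ] H)
    (hS_sa : IsSelfAdjoint S)
    (hS_pos : ∀ x : H, x ≠ 0 → 0 < (inner ℂ (S x) x : ℂ).re)
    (hS_compact : IsCompactOperator (⇑S))
    (hA_sa : IsSelfAdjoint A)
    -- `R` is the positive square root of `S`
    (R : H →L[ℂ] H)
    (hR_sa : IsSelfAdjoint R)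
    (hR_pos : ∀ x : H, 0 ≤ (inner ℂ (R x) x : ℂ).re)
    (hR_sq : R ∘L R = S)
    -- eigen-data
    (lam : ℕ → ℝ) (hlam : ∀ n, lam n ≠ 0)
    (f : ℕ → H) (hf : ∀ n, adjoint (S ∘L A) (f n) = (lam n : ℂ) • f n)
    (g : ℕ → H) (hg : ∀ n, g n = S (f n))
    (horth : Orthonormal ℂ (fun n => R (f n))) :
    ∀ x y : H,
      Summable (fun n => ‖(lam n : ℂ) * inner ℂ (g n) x * inner ℂ y (f n)‖) ∧
      ∑' n, ‖(lam n : ℂ) * inner ℂ (g n) x * inner ℂ y (f n)‖ ≤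
        ‖R x‖ * ‖R (A y)‖ := by
  intro x y
  have hRadj : ContinuousLinearMap.adjoint R = R := hR_sa
  have hSadj : ContinuousLinearMap.adjoint S = S := hS_sa
  have hAadj : ContinuousLinearMap.adjoint A = A := hA_sa
  -- A (S (f n)) = lam n • f n
  have hAS : ∀ n, A (S (f n)) = (lam n : ℂ) • f n := by
    intro n
    have := hf n
    rwa [ContinuousLinearMap.adjoint_comp, hSadj, hAadj] at this
  -- move R across inner ℂ products
  have hRmove : ∀ u v : H, (inner ℂ (R u) v : ℂ) = inner ℂ u (R v) := by
    intro u v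
    conv_lhs => rw [← hRadj]
    exact ContinuousLinearMap.adjoint_inner_left R v u
  -- key identity for each term
  have hterm : ∀ n, (lam n : ℂ) * inner ℂ (g n) x * inner ℂ y (f n)
      = (inner ℂ (R (f n)) (R x) : ℂ) * inner ℂ (R (A y)) (R (f n)) := by
    intro n
    have h1 : (inner ℂ (g n) x : ℂ) = inner ℂ (R (f n)) (R x) := by
      rw [hg n, ← hR_sq]
      simp only [ContinuousLinearMap.comp_apply]
      exact hRmove (R (f n)) x
    have h2 : (lam n : ℂ) * inner ℂ y (f n) = inner ℂ (R (A y)) (R (f n)) := by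
      have : (lam n : ℂ) * (inner ℂ y (f n) : ℂ) = inner ℂ y ((lam n : ℂ) • f n) := by
        rw [inner_smul_right]
      rw [this, ← hAS n]
      have hAy : (inner ℂ y (A (S (f n))) : ℂ) = inner ℂ (A y) (S (f n)) := by
        conv_lhs => rw [← hAadj]
        exact ContinuousLinearMap.adjoint_inner_right A y (S (f n))
      rw [hAy, ← hR_sq]
      simp only [ContinuousLinearMap.comp_apply]
      exact (hRmove (A y) (R (f n))).symm
    rw [h1, mul_comm ((lam n : ℂ)) _, mul_assoc, h2]
  set e : ℕ → H := fun n => R (f n) with he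
  set a : ℕ → ℝ := fun n => ‖(inner ℂ (e n) (R x) : ℂ)‖ with ha
  set b : ℕ → ℝ := fun n => ‖(inner ℂ (e n) (R (A y)) : ℂ)‖ with hb
  have habs : ∀ n, ‖(lam n : ℂ) * inner ℂ (g n) x * inner ℂ y (f n)‖ = a n * b n := by
    intro n
    rw [hterm n]
    rw [norm_mul]
    simp only [ha, hb, he]
    rw [norm_inner_symm (R (A y)) (R (f n))]
  have ha2 : Summable fun n => a n ^ 2 := horth.inner_products_summable (R x)
  have hb2 : Summable fun n => b n ^ 2 := horth.inner_products_summable (R (A y))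
  have hanneg : ∀ n, 0 ≤ a n := fun n => norm_nonneg _
  have hbnneg : ∀ n, 0 ≤ b n := fun n => norm_nonneg _
  have hsum : Summable fun n => a n * b n := by
    apply Summable.of_nonneg_of_le (fun n => mul_nonneg (hanneg n) (hbnneg n))
      (fun n => ?_) (((ha2.add hb2).div_const 2))
    have := two_mul_le_add_sq (a n) (b n)
    nlinarith [this]
  constructor
  · exact hsum.congr (fun n => (habs n).symm)
  · have hts : (∑' n, ‖(lam n : ℂ) * inner ℂ (g n) x * inner ℂ y (f n)‖)
        = ∑' n, a n * b n := tsum_congr habs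
    rw [hts]
    apply Summable.tsum_le_of_sum_le hsum
    intro s
    have hCS : (∑ n ∈ s, a n * b n) ^ 2 ≤ (∑ n ∈ s, a n ^ 2) * (∑ n ∈ s, b n ^ 2) :=
      Finset.sum_mul_sq_le_sq_mul_sq s a b
    have hA2 : (∑ n ∈ s, a n ^ 2) ≤ ‖R x‖ ^ 2 := horth.sum_inner_products_le (R x)
    have hB2 : (∑ n ∈ s, b n ^ 2) ≤ ‖R (A y)‖ ^ 2 := horth.sum_inner_products_le (R (A y))
    have hsnn : 0 ≤ ∑ n ∈ s, a n * b n :=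
      Finset.sum_nonneg (fun n _ => mul_nonneg (hanneg n) (hbnneg n))
    have hP : 0 ≤ ‖R x‖ * ‖R (A y)‖ := mul_nonneg (norm_nonneg _) (norm_nonneg _)
    have h2 : (∑ n ∈ s, a n * b n) ^ 2 ≤ (‖R x‖ * ‖R (A y)‖) ^ 2 := by
      calc (∑ n ∈ s, a n * b n) ^ 2 ≤ (∑ n ∈ s, a n ^ 2) * (∑ n ∈ s, b n ^ 2) := hCS
        _ ≤ ‖R x‖ ^ 2 * ‖R (A y)‖ ^ 2 := by
            apply mul_le_mul hA2 hB2 (Finset.sum_nonneg fun n _ => sq_nonneg _) (sq_nonneg _)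
        _ = (‖R x‖ * ‖R (A y)‖) ^ 2 := by ring
    exact (abs_le_of_sq_le_sq' h2 hP).2
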